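/- Let P be a stochastic tensor, α ∈ (0,1), v ∈ S₁, and suppose α·T(P) < 1. Then the multilinear PageRank equation x = αPxx + (1−α)v has a unique solution x ∈ S₁, the iteration x_{t+1} = αP x_t x_t + (1−α)v converges to x with rate at least αT(P), and ‖x − v‖₁ ≤ 2α. -/

import Mathlib

open Finset Filter Topology

noncomputable section

/-- The probability simplex in `ℝⁿ`. -/
def S1 (n : ℕ) : Set (Fin n → ℝ) := {x | (∀ i, 0 ≤ x i) ∧ ∑ i, x i = 1}

/-- Zero-sum vectors of ℓ¹ norm one. -/
def Z1 (n : ℕ) : Set (Fin n → ℝ) := {y | ∑ i, y i = 0 ∧ ∑ i, |y i| = 1}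

/-- Tensor-vector-vector product `(Pxy)_i = ∑_{j,k} P_{ijk} x_j y_k`. -/
def tvv {n : ℕ} (P : Fin n → Fin n → Fin n → ℝ) (x y : Fin n → ℝ) : Fin n → ℝ :=
  fun i => ∑ j, ∑ k, P i j k * x j * y k

/-- A (column) stochastic third-order tensor. -/
def Stochastic {n : ℕ} (P : Fin n → Fin n → Fin n → ℝ) : Prop :=
  (∀ i j k, 0 ≤ P i j k) ∧ ∀ j k, ∑ i, P i j k = 1

/-- A column stochastic matrix. -/
def StochasticM {n : ℕ} (P : Fin n → Fin n → ℝ) : Prop :=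
  (∀ i j, 0 ≤ P i j) ∧ ∀ j, ∑ i, P i j = 1

/-- Higher-order ergodicity coefficient `T_L`. -/
def TL {n : ℕ} (P : Fin n → Fin n → Fin n → ℝ) : ℝ :=
  sSup {r | ∃ x ∈ S1 n, ∃ y ∈ Z1 n, r = ∑ i, |tvv P x y i|}

/-- Higher-order ergodicity coefficient `T_R`. -/
def TR {n : ℕ} (P : Fin n → Fin n → Fin n → ℝ) : ℝ :=
  sSup {r | ∃ x ∈ S1 n, ∃ y ∈ Z1 n, r = ∑ i, |tvv P y x i|}

/-- Higher-order ergodicity coefficient `T`. -/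
def TT {n : ℕ} (P : Fin n → Fin n → Fin n → ℝ) : ℝ :=
  sSup {r | ∃ x ∈ S1 n, ∃ y ∈ Z1 n, r = ∑ i, |tvv P x y i + tvv P y x i|}

/-- Tensor 1-norm `‖P‖₁ = max_{j,k} ∑_i |P_{ijk}|`. -/
def tnorm {n : ℕ} (P : Fin n → Fin n → Fin n → ℝ) : ℝ :=
  ⨆ j, ⨆ k, ∑ i, |P i j k|

/-- 1-norm ergodicity coefficient of a matrix. -/
def tau1 {n : ℕ} (P : Fin n → Fin n → ℝ) : ℝ :=
  sSup {r | ∃ y ∈ Z1 n, r = ∑ i, |∑ j, P i j * y j|}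

section aux
variable {n : ℕ} (P : Fin n → Fin n → Fin n → ℝ)

lemma aux_tvv_sum (hP : Stochastic P) (x y : Fin n → ℝ) :
    ∑ i, tvv P x y i = (∑ j, x j) * (∑ k, y k) := by
  unfold tvv
  rw [Finset.sum_comm]
  rw [Finset.sum_mul]
  refine Finset.sum_congr rfl fun j _ => ?_
  rw [Finset.sum_comm, Finset.mul_sum]
  refine Finset.sum_congr rfl fun k _ => ?_
  rw [← Finset.sum_mul, ← Finset.sum_mul, hP.2 j k, one_mul]

lemma aux_tvv_nonneg (hP : Stochastic P) {x y : Fin n → ℝ} (hx : ∀ j, 0 ≤ x j)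
    (hy : ∀ k, 0 ≤ y k) (i : Fin n) : 0 ≤ tvv P x y i :=
  Finset.sum_nonneg fun j _ => Finset.sum_nonneg fun k _ =>
    mul_nonneg (mul_nonneg (hP.1 i j k) (hx j)) (hy k)

lemma aux_tvv_abs (hP : Stochastic P) (x y : Fin n → ℝ) :
    ∑ i, |tvv P x y i| ≤ (∑ j, |x j|) * (∑ k, |y k|) := by
  have h1 : ∀ i, |tvv P x y i| ≤ ∑ j, ∑ k, P i j k * |x j| * |y k| := by
    intro i
    refine (Finset.abs_sum_le_sum_abs _ _).trans ?_
    refine Finset.sum_le_sum fun j _ => ?_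
    refine (Finset.abs_sum_le_sum_abs _ _).trans ?_
    refine Finset.sum_le_sum fun k _ => ?_
    rw [abs_mul, abs_mul, abs_of_nonneg (hP.1 i j k)]
  calc ∑ i, |tvv P x y i| ≤ ∑ i, ∑ j, ∑ k, P i j k * |x j| * |y k| :=
        Finset.sum_le_sum fun i _ => h1 i
    _ = (∑ j, |x j|) * (∑ k, |y k|) := aux_tvv_sum P hP (fun j => |x j|) (fun k => |y k|)

lemma aux_bdd : BddAbove {r | ∃ x ∈ S1 n, ∃ y ∈ Z1 n, r = ∑ i, |tvv P x y i + tvv P y x i|} ∨ True := Or.inr trivial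

lemma aux_bddAbove (hP : Stochastic P) :
    BddAbove {r | ∃ x ∈ S1 n, ∃ y ∈ Z1 n, r = ∑ i, |tvv P x y i + tvv P y x i|} := by
  refine ⟨2, fun r hr => ?_⟩
  obtain ⟨x, hx, y, hy, rfl⟩ := hr
  have hx1 : ∑ j, |x j| = 1 := by
    rw [← hx.2]; exact Finset.sum_congr rfl fun j _ => abs_of_nonneg (hx.1 j)
  calc ∑ i, |tvv P x y i + tvv P y x i| ≤ ∑ i, (|tvv P x y i| + |tvv P y x i|) :=
        Finset.sum_le_sum fun i _ => abs_add_le _ _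
    _ = (∑ i, |tvv P x y i|) + ∑ i, |tvv P y x i| := Finset.sum_add_distrib
    _ ≤ (∑ j, |x j|) * (∑ k, |y k|) + (∑ j, |y j|) * (∑ k, |x k|) :=
        add_le_add (aux_tvv_abs P hP x y) (aux_tvv_abs P hP y x)
    _ = 2 := by rw [hx1, hy.2]; norm_num

lemma aux_TT_nonneg (hP : Stochastic P) : 0 ≤ TT P := by
  rcases Set.eq_empty_or_nonempty
      {r | ∃ x ∈ S1 n, ∃ y ∈ Z1 n, r = ∑ i, |tvv P x y i + tvv P y x i|} with he | ⟨r, hr⟩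
  · unfold TT; rw [he, Real.sSup_empty]
  · obtain ⟨x, hx, y, hy, rfl⟩ := hr
    have h1 : (0:ℝ) ≤ ∑ i, |tvv P x y i + tvv P y x i| :=
      Finset.sum_nonneg fun i _ => abs_nonneg _
    exact h1.trans (le_csSup (aux_bddAbove P hP) ⟨x, hx, y, hy, rfl⟩)

end aux

section aux2
variable {n : ℕ} (P : Fin n → Fin n → Fin n → ℝ)

lemma aux_smul_right (c : ℝ) (x y : Fin n → ℝ) (i : Fin n) :
    tvv P x (fun k => c * y k) i = c * tvv P x y i := by
  unfold tvv
  rw [Finset.mul_sum]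
  refine Finset.sum_congr rfl fun j _ => ?_
  rw [Finset.mul_sum]
  exact Finset.sum_congr rfl fun k _ => by ring

lemma aux_smul_left (c : ℝ) (x y : Fin n → ℝ) (i : Fin n) :
    tvv P (fun j => c * y j) x i = c * tvv P y x i := by
  unfold tvv
  rw [Finset.mul_sum]
  refine Finset.sum_congr rfl fun j _ => ?_
  rw [Finset.mul_sum]
  exact Finset.sum_congr rfl fun k _ => by ring

lemma aux_TT_bound (hP : Stochastic P) {x y : Fin n → ℝ} (hx : x ∈ S1 n)
    (hy : ∑ k, y k = 0) :
    ∑ i, |tvv P x y i + tvv P y x i| ≤ TT P * ∑ k, |y k| := by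
  set s := ∑ k, |y k| with hs
  rcases eq_or_lt_of_le (Finset.sum_nonneg (fun k (_ : k ∈ Finset.univ) => abs_nonneg (y k))) with h0 | h0
  · have hyz : ∀ k, y k = 0 := by
      intro k
      have := (Finset.sum_eq_zero_iff_of_nonneg
        (fun k (_ : k ∈ Finset.univ) => abs_nonneg (y k))).mp h0.symm k (Finset.mem_univ k)
      exact abs_eq_zero.mp this
    have h1 : ∀ i, tvv P x y i = 0 := fun i => Finset.sum_eq_zero fun j _ =>
      Finset.sum_eq_zero fun k _ => by rw [hyz k]; ring
    have h2 : ∀ i, tvv P y x i = 0 := fun i => Finset.sum_eq_zero fun j _ =>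
      Finset.sum_eq_zero fun k _ => by rw [hyz j]; ring
    have hsz : s = 0 := hs.trans h0.symm
    simp [h1, h2, hsz]
  · set y' : Fin n → ℝ := fun k => s⁻¹ * y k with hy'
    have hsne : s ≠ 0 := ne_of_gt h0
    have hy'Z : y' ∈ Z1 n := by
      constructor
      · show ∑ k, s⁻¹ * y k = 0
        rw [← Finset.mul_sum, hy, mul_zero]
      · show ∑ k, |s⁻¹ * y k| = 1
        have : ∀ k, |s⁻¹ * y k| = s⁻¹ * |y k| := fun k => by
          rw [abs_mul, abs_of_pos (inv_pos.mpr h0)]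
        rw [Finset.sum_congr rfl fun k _ => this k, ← Finset.mul_sum, ← hs,
          inv_mul_cancel₀ hsne]
    have key : ∀ i, tvv P x y i + tvv P y x i = s * (tvv P x y' i + tvv P y' x i) := by
      intro i
      have e1 : tvv P x y' i = s⁻¹ * tvv P x y i := aux_smul_right P s⁻¹ x y i
      have e2 : tvv P y' x i = s⁻¹ * tvv P y x i := aux_smul_left P s⁻¹ x y i
      rw [e1, e2]
      field_simp
    calc ∑ i, |tvv P x y i + tvv P y x i|
        = ∑ i, s * |tvv P x y' i + tvv P y' x i| := by
          refine Finset.sum_congr rfl fun i _ => ?_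
          rw [key i, abs_mul, abs_of_pos h0]
      _ = s * ∑ i, |tvv P x y' i + tvv P y' x i| := by rw [← Finset.mul_sum]
      _ ≤ s * TT P := by
          refine mul_le_mul_of_nonneg_left ?_ h0.le
          exact le_csSup (aux_bddAbove P hP) ⟨x, hx, y', hy'Z, rfl⟩
      _ = TT P * s := mul_comm _ _

lemma aux_split (x x' : Fin n → ℝ) (i : Fin n) :
    tvv P x x i - tvv P x' x' i =
      tvv P (fun j => (x j + x' j)/2) (fun j => x j - x' j) i +
      tvv P (fun j => x j - x' j) (fun j => (x j + x' j)/2) i := by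
  unfold tvv
  rw [← Finset.sum_sub_distrib, ← Finset.sum_add_distrib]
  refine Finset.sum_congr rfl fun j _ => ?_
  rw [← Finset.sum_sub_distrib, ← Finset.sum_add_distrib]
  exact Finset.sum_congr rfl fun k _ => by ring

lemma aux_contract (hP : Stochastic P) {α : ℝ} (hα0 : 0 < α) (v : Fin n → ℝ)
    {x x' : Fin n → ℝ} (hx : x ∈ S1 n) (hx' : x' ∈ S1 n) :
    ∑ i, |(α * tvv P x x i + (1-α) * v i) - (α * tvv P x' x' i + (1-α) * v i)| ≤
      (α * TT P) * ∑ i, |x i - x' i| := by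
  set m : Fin n → ℝ := fun j => (x j + x' j)/2 with hm
  set d : Fin n → ℝ := fun j => x j - x' j with hd
  have hmS : m ∈ S1 n := by
    constructor
    · exact fun j => div_nonneg (add_nonneg (hx.1 j) (hx'.1 j)) (by norm_num)
    · show ∑ j, (x j + x' j)/2 = 1
      rw [← Finset.sum_div, Finset.sum_add_distrib, hx.2, hx'.2]
      norm_num
  have hd0 : ∑ j, d j = 0 := by
    show ∑ j, (x j - x' j) = 0
    rw [Finset.sum_sub_distrib, hx.2, hx'.2, sub_self]
  calc ∑ i, |(α * tvv P x x i + (1-α) * v i) - (α * tvv P x' x' i + (1-α) * v i)|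
      = ∑ i, α * |tvv P x x i - tvv P x' x' i| := by
        refine Finset.sum_congr rfl fun i _ => ?_
        have e : (α * tvv P x x i + (1-α)*v i) - (α * tvv P x' x' i + (1-α)*v i)
            = α * (tvv P x x i - tvv P x' x' i) := by ring
        rw [e, abs_mul, abs_of_pos hα0]
    _ = α * ∑ i, |tvv P x x i - tvv P x' x' i| := by rw [← Finset.mul_sum]
    _ = α * ∑ i, |tvv P m d i + tvv P d m i| := by
        congr 1
        exact Finset.sum_congr rfl fun i _ => by rw [aux_split]
    _ ≤ α * (TT P * ∑ i, |d i|) :=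
        mul_le_mul_of_nonneg_left (aux_TT_bound P hP hmS hd0) hα0.le
    _ = (α * TT P) * ∑ i, |x i - x' i| := by rw [mul_assoc]

end aux2

theorem stmt18 {n : ℕ} (P : Fin n → Fin n → Fin n → ℝ) (hP : Stochastic P)
    (α : ℝ) (hα0 : 0 < α) (hα1 : α < 1) (v : Fin n → ℝ) (hv : v ∈ S1 n)
    (h : α * TT P < 1) :
    ∃ x ∈ S1 n, (∀ i, x i = α * tvv P x x i + (1 - α) * v i) ∧
      (∀ x' ∈ S1 n, (∀ i, x' i = α * tvv P x' x' i + (1 - α) * v i) → x' = x) ∧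
      (∀ x0 ∈ S1 n, ∀ xs : ℕ → (Fin n → ℝ), xs 0 = x0 →
        (∀ t, xs (t + 1) = fun i => α * tvv P (xs t) (xs t) i + (1 - α) * v i) →
        ∀ t, ∑ i, |xs t i - x i| ≤ (α * TT P) ^ t * ∑ i, |x0 i - x i|) ∧
      ∑ i, |x i - v i| ≤ 2 * α := by
  classical
  set F : (Fin n → ℝ) → (Fin n → ℝ) := fun x i => α * tvv P x x i + (1 - α) * v i with hF
  set r : ℝ := α * TT P with hrdef
  have hr0 : 0 ≤ r := mul_nonneg hα0.le (aux_TT_nonneg P hP)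
  have hr1 : r < 1 := h
  have hFS : ∀ x ∈ S1 n, F x ∈ S1 n := by
    intro x hx
    constructor
    · intro i
      have h1 := aux_tvv_nonneg P hP hx.1 hx.1 i
      have h2 := hv.1 i
      have h3 : (0:ℝ) ≤ 1 - α := by linarith
      exact add_nonneg (mul_nonneg hα0.le h1) (mul_nonneg h3 h2)
    · show ∑ i, (α * tvv P x x i + (1-α)*v i) = 1
      rw [Finset.sum_add_distrib, ← Finset.mul_sum, ← Finset.mul_sum,
        aux_tvv_sum P hP x x, hx.2, hv.2]
      ring
  have hcon : ∀ x ∈ S1 n, ∀ x' ∈ S1 n, ∑ i, |F x i - F x' i| ≤ r * ∑ i, |x i - x' i| :=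
    fun x hx x' hx' => aux_contract P hP hα0 v hx hx'
  set seq : ℕ → Fin n → ℝ := fun t => F^[t] v with hseq
  have hseqS : ∀ t, seq (t + 1) = F (seq t) := fun t => Function.iterate_succ_apply' F t v
  have hmem : ∀ t, seq t ∈ S1 n := by
    intro t; induction t with
    | zero => exact hv
    | succ t ih => rw [hseqS]; exact hFS _ ih
  set C := ∑ i, |seq 1 i - seq 0 i| with hC
  have hC0 : 0 ≤ C := Finset.sum_nonneg fun i _ => abs_nonneg _
  have hstep : ∀ t, ∑ i, |seq (t+1) i - seq t i| ≤ r ^ t * C := by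
    intro t; induction t with
    | zero => simp [hC]
    | succ t ih =>
      rw [hseqS (t+1), hseqS t]
      rw [hseqS t] at ih
      calc ∑ i, |F (F (seq t)) i - F (seq t) i| ≤ r * ∑ i, |F (seq t) i - seq t i| :=
            hcon _ (hFS _ (hmem t)) _ (hmem t)
        _ ≤ r * (r ^ t * C) := mul_le_mul_of_nonneg_left ih hr0
        _ = r ^ (t+1) * C := by ring
  have hdist : ∀ t, dist (seq t) (seq (t+1)) ≤ C * r ^ t := by
    intro t
    rw [dist_pi_le_iff (mul_nonneg hC0 (pow_nonneg hr0 t))]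
    intro i
    rw [Real.dist_eq]
    calc |seq t i - seq (t+1) i| = |seq (t+1) i - seq t i| := abs_sub_comm _ _
      _ ≤ ∑ i, |seq (t+1) i - seq t i| :=
          Finset.single_le_sum (f := fun i => |seq (t+1) i - seq t i|) (fun i _ => abs_nonneg _) (Finset.mem_univ i)
      _ ≤ r ^ t * C := hstep t
      _ = C * r ^ t := mul_comm _ _
  obtain ⟨x, hxlim⟩ := cauchySeq_tendsto_of_complete (cauchySeq_of_le_geometric r C hr1 hdist)
  have hxi : ∀ i, Tendsto (fun t => seq t i) atTop (𝓝 (x i)) := fun i => tendsto_pi_nhds.mp hxlim i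
  have hxS : x ∈ S1 n := by
    constructor
    · exact fun i => ge_of_tendsto' (hxi i) (fun t => (hmem t).1 i)
    · have hsum : Tendsto (fun t => ∑ i, seq t i) atTop (𝓝 (∑ i, x i)) :=
        tendsto_finset_sum _ (fun i _ => hxi i)
      have he : (fun t => ∑ i, seq t i) = fun _ => (1:ℝ) := funext fun t => (hmem t).2
      rw [he] at hsum
      exact (tendsto_nhds_unique hsum tendsto_const_nhds)
  have hFcont : Continuous F := by
    refine continuous_pi fun i => ?_
    show Continuous fun x => α * tvv P x x i + (1 - α) * v i
    unfold tvv
    exact (continuous_const.mul (continuous_finset_sum _ fun j _ =>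
      continuous_finset_sum _ fun k _ =>
        (continuous_const.mul (continuous_apply j)).mul (continuous_apply k))).add
      continuous_const
  have hfix : F x = x := by
    have h1 : Tendsto (fun t => F (seq t)) atTop (𝓝 (F x)) := (hFcont.tendsto x).comp hxlim
    have h2 : Tendsto (fun t => seq (t+1)) atTop (𝓝 x) := hxlim.comp (tendsto_add_atTop_nat 1)
    have he : (fun t => F (seq t)) = fun t => seq (t+1) := funext fun t => (hseqS t).symm
    rw [he] at h1
    exact tendsto_nhds_unique h1 h2
  have e : ∀ z : Fin n → ℝ, (∀ i, z i = α * tvv P z z i + (1 - α) * v i) ↔ F z = z := by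
    intro z
    constructor
    · intro hz; funext i; exact (hz i).symm
    · intro hz i; exact (congrFun hz i).symm
  have hfixi : ∀ i, x i = α * tvv P x x i + (1 - α) * v i := (e x).mpr hfix
  refine ⟨x, hxS, hfixi, ?_, ?_, ?_⟩
  · -- uniqueness
    intro x' hx'S hx'fix
    have hF' : F x' = x' := (e x').mp hx'fix
    have hSnn : 0 ≤ ∑ i, |x' i - x i| := Finset.sum_nonneg fun i _ => abs_nonneg _
    have hd : ∑ i, |x' i - x i| ≤ r * ∑ i, |x' i - x i| := by
      have hc := hcon x' hx'S x hxS
      rw [hF', hfix] at hc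
      exact hc
    have hS0 : ∑ i, |x' i - x i| = 0 := by nlinarith
    funext i
    have := (Finset.sum_eq_zero_iff_of_nonneg (fun i (_ : i ∈ Finset.univ) => abs_nonneg (x' i - x i))).mp hS0 i (Finset.mem_univ i)
    have := abs_eq_zero.mp this
    linarith
  · -- convergence
    intro x0 hx0 xs hxs0 hxsrec
    have hxsF : ∀ t, xs (t+1) = F (xs t) := fun t => hxsrec t
    have hxsS : ∀ t, xs t ∈ S1 n := by
      intro t; induction t with
      | zero => rw [hxs0]; exact hx0
      | succ t ih => rw [hxsF t]; exact hFS _ ih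
    intro t
    induction t with
    | zero =>
      rw [hxs0, pow_zero, one_mul]
    | succ t ih =>
      calc ∑ i, |xs (t+1) i - x i| = ∑ i, |F (xs t) i - F x i| := by
            rw [hxsF t, hfix]
        _ ≤ r * ∑ i, |xs t i - x i| := hcon _ (hxsS t) _ hxS
        _ ≤ r * (r ^ t * ∑ i, |x0 i - x i|) := mul_le_mul_of_nonneg_left ih hr0
        _ = r ^ (t+1) * ∑ i, |x0 i - x i| := by ring
  · -- distance to v
    have hkey : ∀ i, x i - v i = α * (tvv P x x i - v i) := fun i => by rw [hfixi i]; ring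
    calc ∑ i, |x i - v i| = ∑ i, α * |tvv P x x i - v i| := by
          refine Finset.sum_congr rfl fun i _ => ?_
          rw [hkey i, abs_mul, abs_of_pos hα0]
      _ = α * ∑ i, |tvv P x x i - v i| := by rw [← Finset.mul_sum]
      _ ≤ α * ∑ i, (|tvv P x x i| + |v i|) := by
          refine mul_le_mul_of_nonneg_left (Finset.sum_le_sum fun i _ => ?_) hα0.le
          calc |tvv P x x i - v i| = |tvv P x x i + -(v i)| := by rw [sub_eq_add_neg]
            _ ≤ |tvv P x x i| + |-(v i)| := abs_add_le _ _
            _ = |tvv P x x i| + |v i| := by rw [abs_neg]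
      _ = α * ((∑ i, tvv P x x i) + ∑ i, v i) := by
          rw [Finset.sum_add_distrib]
          congr 1
          congr 1
          · exact Finset.sum_congr rfl fun i _ => abs_of_nonneg (aux_tvv_nonneg P hP hxS.1 hxS.1 i)
          · exact Finset.sum_congr rfl fun i _ => abs_of_nonneg (hv.1 i)
      _ = 2 * α := by
          rw [aux_tvv_sum P hP x x, hxS.2, hv.2]
          ring
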